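/- For every natural number m ≥ 3, B_m ⊆ B_2. That is, if there exists x ∈ [0,1/(q-1)] having exactly m expansions in base q with 3 ≤ m < ∞, then there exists x' ∈ [0,1/(q-1)] having exactly two expansions in base q. -/

import Mathlib

noncomputable section

/-- `a` is an expansion of `x` in base `q`: all digits `a n` lie in `{0,1}` and
`x = Σ_{n≥1} a_n q^{-n}` (here `a n` is the `(n+1)`-st digit, i.e. indexing is 0-based). -/
def IsExpansion (q x : ℝ) (a : ℕ → ℕ) : Prop :=
  (∀ n, a n ≤ 1) ∧ x = ∑' n : ℕ, (a n : ℝ) / q ^ (n + 1)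

/-- The set of expansions of `x` in base `q`. -/
def expansionsOf (q x : ℝ) : Set (ℕ → ℕ) := {a | IsExpansion q x a}

/-- `U_q`: the set of `x ∈ [0, 1/(q-1)]` having a unique expansion in base `q`. -/
def uniqueExpansionSet (q : ℝ) : Set ℝ :=
  {x | x ∈ Set.Icc 0 (1 / (q - 1)) ∧ ∃! a, IsExpansion q x a}

/-- `B_m` (for finite `m`): bases `q ∈ (G, 2)` for which some `x ∈ I_q` has exactly `m`
expansions in base `q`. -/
def B (m : ℕ) : Set ℝ :=
  {q | q ∈ Set.Ioo ((1 + Real.sqrt 5) / 2) 2 ∧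
    ∃ x ∈ Set.Icc (0:ℝ) (1 / (q - 1)), Cardinal.mk (expansionsOf q x) = m}

/-- `B_{ℵ₀}`: bases `q ∈ (G, 2)` for which some `x ∈ I_q` has exactly countably infinitely
many expansions in base `q`. -/
def Baleph0 : Set ℝ :=
  {q | q ∈ Set.Ioo ((1 + Real.sqrt 5) / 2) 2 ∧
    ∃ x ∈ Set.Icc (0:ℝ) (1 / (q - 1)), Cardinal.mk (expansionsOf q x) = Cardinal.aleph0}

/-- The Thue–Morse sequence: `thueMorse n` is the parity of the number of 1s in the
binary expansion of `n`. -/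
def thueMorse (n : ℕ) : ℕ := ((Nat.digits 2 n).count 1) % 2

/-- A digit `a m` of an expansion of `x` in base `q` is forced if every expansion of `x`
agreeing with `a` before position `m` also agrees at position `m`. -/
def Forced (q x : ℝ) (a : ℕ → ℕ) (m : ℕ) : Prop :=
  ∀ c : ℕ → ℕ, IsExpansion q x c → (∀ i < m, c i = a i) → c m = a m

namespace Stmt5Aux

/-- prepend a digit -/
def cons' (d : ℕ) (b : ℕ → ℕ) : ℕ → ℕ := fun n => Nat.casesOn n d b

lemma summable_aux {q : ℝ} (hq : 1 < q) {a : ℕ → ℕ} (ha : ∀ n, a n ≤ 1) :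
    Summable (fun n => (a n : ℝ) / q ^ (n + 1)) := by
  have hq0 : (0:ℝ) < q := lt_trans one_pos hq
  have hlt : q⁻¹ < 1 := inv_lt_one_of_one_lt₀ hq
  have hgeom : Summable (fun n : ℕ => (q⁻¹) ^ n * q⁻¹) :=
    (summable_geometric_of_lt_one (by positivity) hlt).mul_right _
  refine Summable.of_nonneg_of_le (fun n => by positivity) (fun n => ?_) hgeom
  have h1 : (a n : ℝ) ≤ 1 := by exact_mod_cast ha n
  have h2 : (a n : ℝ) / q ^ (n + 1) ≤ 1 / q ^ (n + 1) := by gcongr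
  have h3 : (1:ℝ) / q ^ (n + 1) = q⁻¹ ^ n * q⁻¹ := by
    rw [pow_succ, inv_pow]
    field_simp
  linarith [h2, h3.le]

lemma tsum_cons {q : ℝ} (hq : 1 < q) (d : ℕ) {b : ℕ → ℕ} (hb : ∀ n, b n ≤ 1) (hd : d ≤ 1) :
    ∑' n : ℕ, (cons' d b n : ℝ) / q ^ (n + 1)
      = d / q + (∑' n : ℕ, (b n : ℝ) / q ^ (n + 1)) / q := by
  have hc : ∀ n, cons' d b n ≤ 1 := by
    intro n; cases n with
    | zero => exact hd
    | succ n => exact hb n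
  have hs : Summable (fun n => (cons' d b n : ℝ) / q ^ (n + 1)) := summable_aux hq hc
  rw [Summable.tsum_eq_zero_add hs]
  have h0 : (cons' d b 0 : ℝ) / q ^ (0 + 1) = d / q := by simp [cons']
  have h1 : ∀ n : ℕ, (cons' d b (n + 1) : ℝ) / q ^ (n + 1 + 1)
      = ((b n : ℝ) / q ^ (n + 1)) / q := by
    intro n
    have : (cons' d b (n + 1) : ℝ) = (b n : ℝ) := rfl
    rw [this, pow_succ]
    ring
  rw [h0]
  congr 1
  rw [tsum_congr h1, tsum_div_const]

lemma isExpansion_cons_iff {q x : ℝ} (hq : 1 < q) {d : ℕ} (hd : d ≤ 1) (b : ℕ → ℕ) :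
    IsExpansion q x (cons' d b) ↔ IsExpansion q (q * x - d) b := by
  have hq0 : q ≠ 0 := by intro h; rw [h] at hq; exact absurd hq (by norm_num)
  constructor
  · rintro ⟨h1, h2⟩
    have hb : ∀ n, b n ≤ 1 := fun n => h1 (n + 1)
    refine ⟨hb, ?_⟩
    rw [tsum_cons hq d hb hd] at h2
    field_simp at h2 ⊢
    linarith
  · rintro ⟨hb, h2⟩
    have hc : ∀ n, cons' d b n ≤ 1 := by
      intro n; cases n with
      | zero => exact hd
      | succ n => exact hb n
    refine ⟨hc, ?_⟩
    rw [tsum_cons hq d hb hd, ← h2]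
    field_simp
    ring

lemma mk_filter_eq {q : ℝ} (hq : 1 < q) (x : ℝ) {d : ℕ} (hd : d ≤ 1) :
    Cardinal.mk {a : ℕ → ℕ | IsExpansion q x a ∧ a 0 = d}
      = Cardinal.mk (expansionsOf q (q * x - d)) := by
  apply Cardinal.mk_congr
  refine ⟨fun a => ⟨fun n => a.1 (n + 1), ?_⟩, fun b => ⟨cons' d b.1, ?_, ?_⟩, ?_, ?_⟩
  · obtain ⟨a, ha, ha0⟩ := a
    have hrw : a = cons' d (fun n => a (n + 1)) := by
      funext n; cases n with
      | zero => exact ha0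
      | succ n => rfl
    have := (isExpansion_cons_iff hq hd (fun n => a (n + 1))).mp (hrw ▸ ha)
    exact this
  · exact (isExpansion_cons_iff hq hd b.1).mpr b.2
  · rfl
  · rintro ⟨a, ha, ha0⟩
    apply Subtype.ext
    funext n
    cases n with
    | zero => exact ha0.symm
    | succ n => rfl
  · rintro ⟨b, hb⟩
    apply Subtype.ext
    rfl

lemma mk_split {q : ℝ} (hq : 1 < q) (x : ℝ) :
    Cardinal.mk (expansionsOf q x)
      = Cardinal.mk (expansionsOf q (q * x))
        + Cardinal.mk (expansionsOf q (q * x - 1)) := by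
  have e0 : Cardinal.mk {a : ℕ → ℕ | IsExpansion q x a ∧ a 0 = 0}
      = Cardinal.mk (expansionsOf q (q * x)) := by
    have := mk_filter_eq hq x (d := 0) (by norm_num)
    simpa using this
  have e1 : Cardinal.mk {a : ℕ → ℕ | IsExpansion q x a ∧ a 0 = 1}
      = Cardinal.mk (expansionsOf q (q * x - 1)) := by
    have := mk_filter_eq hq x (d := 1) le_rfl
    simpa using this
  have hu : expansionsOf q x
      = {a : ℕ → ℕ | IsExpansion q x a ∧ a 0 = 0}
        ∪ {a : ℕ → ℕ | IsExpansion q x a ∧ a 0 = 1} := by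
    ext a
    constructor
    · intro h
      have := h.1 0
      rcases Nat.le_one_iff_eq_zero_or_eq_one.mp this with h0 | h0
      · exact Or.inl ⟨h, h0⟩
      · exact Or.inr ⟨h, h0⟩
    · rintro (⟨h, _⟩ | ⟨h, _⟩) <;> exact h
  have hdisj : Disjoint {a : ℕ → ℕ | IsExpansion q x a ∧ a 0 = 0}
      {a : ℕ → ℕ | IsExpansion q x a ∧ a 0 = 1} := by
    rw [Set.disjoint_left]
    rintro a ⟨_, h0⟩ ⟨_, h1⟩
    omega
  calc Cardinal.mk (expansionsOf q x)
      = Cardinal.mk ({a : ℕ → ℕ | IsExpansion q x a ∧ a 0 = 0}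
        ∪ {a : ℕ → ℕ | IsExpansion q x a ∧ a 0 = 1} : Set (ℕ → ℕ)) := by rw [← hu]
    _ = _ := by rw [Cardinal.mk_union_of_disjoint hdisj, e0, e1]

lemma mem_Icc_of_expansion {q x : ℝ} (hq : 1 < q) {a : ℕ → ℕ} (ha : IsExpansion q x a) :
    x ∈ Set.Icc (0:ℝ) (1 / (q - 1)) := by
  obtain ⟨h1, h2⟩ := ha
  have hq0 : (0:ℝ) < q := lt_trans one_pos hq
  have hs := summable_aux hq h1
  have hone : Summable (fun n : ℕ => (1:ℝ) / q ^ (n + 1)) := by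
    have := summable_aux hq (a := fun _ => 1) (fun _ => le_rfl)
    simpa using this
  constructor
  · rw [h2]
    exact tsum_nonneg fun n => by positivity
  · rw [h2]
    have hle : ∑' n : ℕ, (a n : ℝ) / q ^ (n + 1) ≤ ∑' n : ℕ, (1:ℝ) / q ^ (n + 1) := by
      refine Summable.tsum_le_tsum (fun n => ?_) hs hone
      gcongr
      exact_mod_cast h1 n
    have hval : ∑' n : ℕ, (1:ℝ) / q ^ (n + 1) = 1 / (q - 1) := by
      have hrw : ∀ n : ℕ, (1:ℝ) / q ^ (n + 1) = q⁻¹ ^ n * q⁻¹ := by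
        intro n
        rw [pow_succ, inv_pow]
        field_simp
      rw [tsum_congr hrw, tsum_mul_right,
        tsum_geometric_of_lt_one (by positivity) (inv_lt_one_of_one_lt₀ hq)]
      have hq1 : q - 1 ≠ 0 := by intro h; apply absurd hq; rw [sub_eq_zero] at h; simp [h]
      field_simp
    linarith

lemma descent {q : ℝ} (hq : 1 < q) :
    ∀ n : ℕ, 2 ≤ n → (∃ x : ℝ, Cardinal.mk (expansionsOf q x) = (n : ℕ)) →
      ∃ z : ℝ, Cardinal.mk (expansionsOf q z) = ((2 : ℕ) : Cardinal) := by
  intro n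
  induction n using Nat.strong_induction_on with
  | _ n ih =>
    rintro hn ⟨x, hx⟩
    rcases eq_or_lt_of_le hn with h2 | h3
    · exact ⟨x, by rw [hx, ← h2]⟩
    -- n ≥ 3; find two distinct expansions
    have hnontriv : Nontrivial (expansionsOf q x) := by
      rw [← Cardinal.one_lt_iff_nontrivial, hx]
      exact_mod_cast lt_of_lt_of_le one_lt_two hn
    obtain ⟨⟨a, haE⟩, ⟨b, hbE⟩, hab⟩ := hnontriv
    have haE : IsExpansion q x a := haE
    have hbE : IsExpansion q x b := hbE
    have hab' : a ≠ b := fun h => hab (Subtype.ext h)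
    have hex : ∃ k, a k ≠ b k := by
      by_contra h; push_neg at h; exact hab' (funext h)
    set k := Nat.find hex with hkdef
    have hkne : a k ≠ b k := Nat.find_spec hex
    have hklt : ∀ i < k, a i = b i := by
      intro i hi
      have := Nat.find_min hex hi
      tauto
    -- the iterated shift points
    set X : ℕ → ℝ := fun j => Nat.rec x (fun j xj => q * xj - a j) j with hXdef
    have hXs : ∀ j, X (j + 1) = q * X j - a j := fun j => rfl
    -- drops of a and b are expansions of X j for j ≤ k
    have key : ∀ j, j ≤ k → IsExpansion q (X j) (fun n => a (n + j))
        ∧ IsExpansion q (X j) (fun n => b (n + j)) := by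
      intro j
      induction j with
      | zero =>
        intro _
        constructor
        · exact haE
        · exact hbE
      | succ j ihj =>
        intro hj
        have hjk : j < k := hj
        obtain ⟨hA, hB⟩ := ihj (le_of_lt hjk)
        have hra : (fun n => a (n + j)) = cons' (a j) (fun n => a (n + (j + 1))) := by
          funext n
          cases n with
          | zero => simp [cons']
          | succ n =>
            show a (n + 1 + j) = a (n + (j + 1))
            congr 1
            omega
        have hrb : (fun n => b (n + j)) = cons' (a j) (fun n => b (n + (j + 1))) := by
          funext n
          cases n with
          | zero => simp [cons', hklt j hjk]
          | succ n =>
            show b (n + 1 + j) = b (n + (j + 1))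
            congr 1
            omega
        rw [hra] at hA
        rw [hrb] at hB
        exact ⟨(isExpansion_cons_iff hq (haE.1 j) _).mp hA,
          (isExpansion_cons_iff hq (haE.1 j) _).mp hB⟩
    obtain ⟨hAk, hBk⟩ := key k le_rfl
    -- one more shift, by digits a k and b k respectively
    have hA' : IsExpansion q (q * X k - a k) (fun n => a (n + (k + 1))) := by
      have hra : (fun n => a (n + k)) = cons' (a k) (fun n => a (n + (k + 1))) := by
        funext n
        cases n with
        | zero => simp [cons']
        | succ n =>
          show a (n + 1 + k) = a (n + (k + 1))
          congr 1; omega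
      rw [hra] at hAk
      exact (isExpansion_cons_iff hq (haE.1 k) _).mp hAk
    have hB' : IsExpansion q (q * X k - b k) (fun n => b (n + (k + 1))) := by
      have hrb : (fun n => b (n + k)) = cons' (b k) (fun n => b (n + (k + 1))) := by
        funext n
        cases n with
        | zero => simp [cons']
        | succ n =>
          show b (n + 1 + k) = b (n + (k + 1))
          congr 1; omega
      rw [hrb] at hBk
      exact (isExpansion_cons_iff hq (hbE.1 k) _).mp hBk
    -- both branches nonempty
    have hdig : (a k = 0 ∧ b k = 1) ∨ (a k = 1 ∧ b k = 0) := by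
      have h1 := haE.1 k
      have h2 := hbE.1 k
      omega
    have hne0 : (expansionsOf q (q * X k)).Nonempty := by
      rcases hdig with ⟨h, _⟩ | ⟨_, h⟩
      · refine ⟨fun n => a (n + (k + 1)), ?_⟩
        have := hA'
        rw [h] at this
        simpa [expansionsOf] using this
      · refine ⟨fun n => b (n + (k + 1)), ?_⟩
        have := hB'
        rw [h] at this
        simpa [expansionsOf] using this
    have hne1 : (expansionsOf q (q * X k - 1)).Nonempty := by
      rcases hdig with ⟨_, h⟩ | ⟨h, _⟩
      · refine ⟨fun n => b (n + (k + 1)), ?_⟩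
        have := hB'
        rw [h] at this
        simpa [expansionsOf] using this
      · refine ⟨fun n => a (n + (k + 1)), ?_⟩
        have := hA'
        rw [h] at this
        simpa [expansionsOf] using this
    -- cardinal bounds
    have hmono : ∀ j, Cardinal.mk (expansionsOf q (X (j + 1)))
        ≤ Cardinal.mk (expansionsOf q (X j)) := by
      intro j
      rw [hXs j]
      rw [mk_split hq (X j)]
      rcases Nat.le_one_iff_eq_zero_or_eq_one.mp (haE.1 j) with h | h <;> rw [h]
      · push_cast
        rw [sub_zero]
        exact self_le_add_right _ _
      · push_cast
        exact self_le_add_left _ _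
    have hchain : ∀ j, Cardinal.mk (expansionsOf q (X j)) ≤ (n : Cardinal) := by
      intro j
      induction j with
      | zero => rw [show X 0 = x from rfl, hx]
      | succ j ihj => exact le_trans (hmono j) ihj
    have hsplitk := mk_split hq (X k)
    set c0 := Cardinal.mk (expansionsOf q (q * X k)) with hc0def
    set c1 := Cardinal.mk (expansionsOf q (q * X k - 1)) with hc1def
    have hck : Cardinal.mk (expansionsOf q (X k)) = c0 + c1 := hsplitk
    have hsum_le : c0 + c1 ≤ (n : Cardinal) := hck ▸ hchain k
    have hc0lt : c0 < Cardinal.aleph0 :=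
      lt_of_le_of_lt (le_trans (self_le_add_right _ _) hsum_le) (Cardinal.nat_lt_aleph0 n)
    have hc1lt : c1 < Cardinal.aleph0 :=
      lt_of_le_of_lt (le_trans (self_le_add_left _ _) hsum_le) (Cardinal.nat_lt_aleph0 n)
    obtain ⟨n0, hn0⟩ := Cardinal.lt_aleph0.mp hc0lt
    obtain ⟨n1, hn1⟩ := Cardinal.lt_aleph0.mp hc1lt
    have hn0pos : 1 ≤ n0 := by
      have : c0 ≠ 0 := by
        rw [hc0def, Cardinal.mk_ne_zero_iff]
        exact Set.nonempty_coe_sort.mpr hne0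
      rw [hn0] at this
      exact_mod_cast Nat.one_le_iff_ne_zero.mpr (by exact_mod_cast fun h => this (by rw [h]; simp))
    have hn1pos : 1 ≤ n1 := by
      have : c1 ≠ 0 := by
        rw [hc1def, Cardinal.mk_ne_zero_iff]
        exact Set.nonempty_coe_sort.mpr hne1
      rw [hn1] at this
      exact_mod_cast Nat.one_le_iff_ne_zero.mpr (by exact_mod_cast fun h => this (by rw [h]; simp))
    have hsum_le' : n0 + n1 ≤ n := by
      rw [hn0, hn1] at hsum_le
      exact_mod_cast hsum_le
    by_cases hcase : n0 + n1 = 2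
    · -- X k has exactly two expansions
      refine ⟨X k, ?_⟩
      rw [hck, hn0, hn1, ← Nat.cast_add]
      exact_mod_cast hcase
    · -- one branch has between 2 and n-1 expansions
      have h3' : 3 ≤ n0 + n1 := by omega
      rcases Nat.lt_or_ge n0 2 with hlt' | hge'
      · -- n1 ≥ 2
        have hn1ge : 2 ≤ n1 := by omega
        have hn1lt : n1 < n := by omega
        exact ih n1 hn1lt hn1ge ⟨q * X k - 1, hn1⟩
      · have hn0lt : n0 < n := by omega
        exact ih n0 hn0lt hge' ⟨q * X k, hn0⟩

end Stmt5Aux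

theorem stmt5 : ∀ m : ℕ, 3 ≤ m → B m ⊆ B 2 := by
  intro m hm q hq
  obtain ⟨hIoo, x, hxIcc, hx⟩ := hq
  have hsqrt : (1:ℝ) < Real.sqrt 5 := by
    rw [show (1:ℝ) = Real.sqrt 1 by simp]
    exact Real.sqrt_lt_sqrt (by norm_num) (by norm_num)
  have hq1 : 1 < q := lt_trans (by linarith) hIoo.1
  obtain ⟨z, hz⟩ := Stmt5Aux.descent hq1 m (by omega) ⟨x, hx⟩
  refine ⟨hIoo, z, ?_, hz⟩
  have hne : Nonempty (expansionsOf q z) := by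
    rw [← Cardinal.mk_ne_zero_iff, hz]
    exact_mod_cast (two_ne_zero : (2:ℕ) ≠ 0)
  obtain ⟨a, ha⟩ := hne
  exact Stmt5Aux.mem_Icc_of_expansion hq1 ha
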